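/- Let R ⊆ S be integral domains, 𝔪 ∈ Max R, 𝔫 ∈ Max S with 𝔫 ∩ R = 𝔪 and R_𝔪 = S_𝔫 (inside Frac S). Then for every prime 𝔭 of R contained in 𝔪, the extension 𝔭S_𝔫 is a prime ideal of S_𝔫 and 𝔭S_𝔫 ∩ R = 𝔭. -/

import Mathlib

/-- The localization of a ring `T` at an ideal `M`, realized as a subset of `K` via
`f : T →+* K`. -/
def locSet {T K : Type*} [CommRing T] [CommRing K] (f : T →+* K) (M : Ideal T) : Set K :=
  {x | ∃ a b : T, b ∉ M ∧ x * f b = f a}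

/-- Let `R ⊆ S` be integral domains, `𝔪 ∈ Max R`, `𝔫 ∈ Max S` with `𝔫 ∩ R = 𝔪` and
`R_𝔪 = S_𝔫` inside `Frac S`.  Then for every prime `𝔭 ⊆ 𝔪` of `R`, the extension
`𝔭S_𝔫` is a prime ideal of `S_𝔫` and `𝔭S_𝔫 ∩ R = 𝔭`. -/
theorem stmt_14 {S : Type*} [CommRing S] [IsDomain S] (R : Subring S)
    (m : Ideal R) (hm : m.IsMaximal)
    (n : Ideal S) [hnp : n.IsPrime] (hn : n.IsMaximal)
    (hcon : n.comap R.subtype = m)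
    (hloc : locSet ((algebraMap S (FractionRing S)).comp R.subtype) m
      = locSet (algebraMap S (FractionRing S)) n) :
    ∀ p : Ideal R, p.IsPrime → p ≤ m →
      (Ideal.map ((algebraMap S (Localization.AtPrime n)).comp R.subtype) p).IsPrime ∧
      Ideal.comap ((algebraMap S (Localization.AtPrime n)).comp R.subtype)
          (Ideal.map ((algebraMap S (Localization.AtPrime n)).comp R.subtype) p)
        = p := by
  intro p hp hpm
  set f : R →+* Localization.AtPrime n :=
    (algebraMap S (Localization.AtPrime n)).comp R.subtype with hf
  letI : Algebra R (Localization.AtPrime n) := f.toAlgebra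
  have hφinj : Function.Injective (algebraMap S (FractionRing S)) :=
    IsFractionRing.injective S (FractionRing S)
  have hle : n.primeCompl ≤ nonZeroDivisors S := fun x hx =>
    mem_nonZeroDivisors_of_ne_zero (fun h => (hx : x ∉ n) (h ▸ n.zero_mem))
  have hninj : Function.Injective (algebraMap S (Localization.AtPrime n)) :=
    IsLocalization.injective (Localization.AtPrime n) hle
  have hnotn : ∀ b : R, b ∉ m → (b : S) ∉ n := by
    intro b hb hbn
    exact hb (hcon ▸ (Ideal.mem_comap.mpr hbn))
  haveI hIL : IsLocalization m.primeCompl (Localization.AtPrime n) := by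
    constructor
    constructor
    · rintro ⟨y, hy⟩
      exact IsLocalization.map_units (M := n.primeCompl) (Localization.AtPrime n)
        ⟨(y : S), hnotn y hy⟩
    · intro z
      obtain ⟨⟨s, t⟩, hz⟩ := IsLocalization.surj (M := n.primeCompl) z
      -- element s/t in Frac S lies in locSet n side
      have ht : (t : S) ∉ n := t.2
      have ht0 : (t : S) ≠ 0 := fun h => ht (h ▸ n.zero_mem)
      have hφt0 : (algebraMap S (FractionRing S)) (t : S) ≠ 0 :=
        (map_ne_zero_iff _ hφinj).mpr ht0
      have htu : IsUnit ((algebraMap S (FractionRing S)) (t : S)) :=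
        isUnit_iff_ne_zero.mpr hφt0
      set x : FractionRing S := (algebraMap S (FractionRing S)) s * htu.unit⁻¹ with hx
      have hxt : x * (algebraMap S (FractionRing S)) t = (algebraMap S (FractionRing S)) s := by
        rw [hx, mul_assoc]
        rw [htu.val_inv_mul, mul_one]
      have hmem : x ∈ locSet (algebraMap S (FractionRing S)) n := ⟨s, t, ht, hxt⟩
      rw [← hloc] at hmem
      obtain ⟨a, b, hb, hab⟩ := hmem
      simp only [RingHom.coe_comp, Function.comp_apply, Subring.coe_subtype] at hab
      -- s * b = a * t in S
      have key : (s : S) * (b : S) = (a : S) * (t : S) := by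
        apply hφinj
        simp only [map_mul]
        calc (algebraMap S (FractionRing S)) s * (algebraMap S (FractionRing S)) b
            = x * (algebraMap S (FractionRing S)) t * (algebraMap S (FractionRing S)) b := by
              rw [hxt]
          _ = (x * (algebraMap S (FractionRing S)) (b : S)) * (algebraMap S (FractionRing S)) t := by
              ring
          _ = (algebraMap S (FractionRing S)) (a : S) * (algebraMap S (FractionRing S)) t := by
              rw [hab]
      refine ⟨⟨a, ⟨b, hb⟩⟩, ?_⟩
      -- need z * f b = f a in S_n
      have htun : IsUnit ((algebraMap S (Localization.AtPrime n)) (t : S)) :=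
        IsLocalization.map_units (M := n.primeCompl) (Localization.AtPrime n) t
      show z * (algebraMap S (Localization.AtPrime n)) (b : S)
          = (algebraMap S (Localization.AtPrime n)) (a : S)
      apply htun.mul_right_cancel
      calc z * (algebraMap S (Localization.AtPrime n)) (b : S)
            * (algebraMap S (Localization.AtPrime n)) (t : S)
          = z * (algebraMap S (Localization.AtPrime n)) (t : S)
            * (algebraMap S (Localization.AtPrime n)) (b : S) := by ring
        _ = (algebraMap S (Localization.AtPrime n)) ((s : S) * (b : S)) := by
            rw [hz, map_mul]
        _ = (algebraMap S (Localization.AtPrime n)) ((a : S) * (t : S)) := by rw [key]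
        _ = _ := by rw [map_mul]
    · intro a b h
      refine ⟨1, ?_⟩
      have : (a : S) = (b : S) := hninj h
      simp [Subtype.ext this]
  have hdisj : Disjoint (m.primeCompl : Set R) (p : Set R) := by
    rw [Set.disjoint_iff]
    rintro x ⟨hx1, hx2⟩
    exact absurd (hpm hx2) hx1
  exact ⟨IsLocalization.isPrime_of_isPrime_disjoint m.primeCompl (Localization.AtPrime n) p hp hdisj,
    IsLocalization.comap_map_of_isPrime_disjoint m.primeCompl (Localization.AtPrime n) hp hdisj⟩
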